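/- Let κ, T ∈ ℝ and α, β ∈ ℂ with α + β ≠ 0. If 1 − α² − 2κ cos(αT) = 0 and 1 − β² − 2κ cos(βT) = 0, then [ (1−αβ)/2 − κ e^{iαT} + κβ·(e^{iβT} − e^{−iαT})/(α+β) ] + [ (1−αβ)/2 − κ e^{iβT} + κα·(e^{iαT} − e^{−iβT})/(α+β) ] = 0. -/

import Mathlib

/-- Vanishing of the symmetrization h_{αβ} + h_{βα} of the Hamiltonian coefficients of
the delayed non-local harmonic oscillator for spectral roots α, β with α + β ≠ 0. -/
theorem stmt14 (κ T : ℝ) (α β : ℂ) (hαβ : α + β ≠ 0)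
    (hα : 1 - α ^ 2 - 2 * (κ : ℂ) * Complex.cos (α * T) = 0)
    (hβ : 1 - β ^ 2 - 2 * (κ : ℂ) * Complex.cos (β * T) = 0) :
    ((1 - α * β) / 2 - (κ : ℂ) * Complex.exp (Complex.I * α * T)
        + (κ : ℂ) * β *
          (Complex.exp (Complex.I * β * T) - Complex.exp (-(Complex.I * α * T))) / (α + β))
      + ((1 - α * β) / 2 - (κ : ℂ) * Complex.exp (Complex.I * β * T)
        + (κ : ℂ) * α *
          (Complex.exp (Complex.I * α * T) - Complex.exp (-(Complex.I * β * T))) / (α + β))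
      = 0 := by
  have ea : α * ↑T * Complex.I = Complex.I * α * T := by ring
  have eb : β * ↑T * Complex.I = Complex.I * β * T := by ring
  have ea' : -(α * ↑T) * Complex.I = -(Complex.I * α * T) := by ring
  have eb' : -(β * ↑T) * Complex.I = -(Complex.I * β * T) := by ring
  rw [Complex.cos, ea, ea'] at hα
  rw [Complex.cos, eb, eb'] at hβ
  field_simp
  rw [show β * Complex.I * ↑T = Complex.I * β * T by ring, show α * Complex.I * ↑T = Complex.I * α * T by ring]
  linear_combination (2 * β : ℂ) * hα + (2 * α : ℂ) * hβ
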